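/- Let θ be a solution of the Kuramoto system of identical oscillators which is not a stationary (constant) solution. Then: (1) z(t) ≠ 0 for all t > 0 (so φ(t) is well defined for all t > 0); (2) Ṙ(t) > 0 for all t > 0; and (3) R(t) converges, as t → ∞, to a limit R* ∈ (0,1]. -/

import Mathlib

open Filter Real

/-- The Kuramoto vector field is Lipschitz. -/
lemma kuramoto_lipschitz (N : ℕ) :
    LipschitzWith 2 (fun (x : Fin N → ℝ) (i : Fin N) =>
      -(1 / (N:ℝ)) * ∑ j : Fin N, Real.sin (x i - x j)) := by
  rcases Nat.eq_zero_or_pos N with h | h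
  · subst h
    intro x y
    simp [Subsingleton.elim x y]
  have hN' : (0:ℝ) < N := Nat.cast_pos.mpr h
  apply LipschitzWith.of_dist_le_mul
  intro x y
  rw [dist_pi_le_iff (by positivity)]
  intro i
  rw [Real.dist_eq]
  have key : -(1 / (N:ℝ)) * ∑ j : Fin N, Real.sin (x i - x j)
      - (-(1 / (N:ℝ)) * ∑ j : Fin N, Real.sin (y i - y j))
      = -(1 / (N:ℝ)) * ∑ j : Fin N, (Real.sin (x i - x j) - Real.sin (y i - y j)) := by
    rw [Finset.sum_sub_distrib]; ring
  rw [key, abs_mul, abs_neg, abs_of_pos (by positivity : (0:ℝ) < 1 / (N:ℝ))]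
  have hterm : ∀ j : Fin N, |Real.sin (x i - x j) - Real.sin (y i - y j)| ≤ 2 * dist x y := by
    intro j
    have h1 : |Real.sin (x i - x j) - Real.sin (y i - y j)| ≤ |(x i - x j) - (y i - y j)| := by
      rw [Real.sin_sub_sin]
      have := Real.abs_sin_le_abs (x := ((x i - x j) - (y i - y j)) / 2)
      calc |2 * Real.sin (((x i - x j) - (y i - y j)) / 2) *
              Real.cos (((x i - x j) + (y i - y j)) / 2)|
          = 2 * |Real.sin (((x i - x j) - (y i - y j)) / 2)| *
              |Real.cos (((x i - x j) + (y i - y j)) / 2)| := by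
            rw [abs_mul, abs_mul]; simp [abs_of_nonneg]
        _ ≤ 2 * (|((x i - x j) - (y i - y j)) / 2|) * 1 := by
            have hc := Real.abs_cos_le_one (((x i - x j) + (y i - y j)) / 2)
            gcongr
        _ = |(x i - x j) - (y i - y j)| := by
            rw [abs_div]; simp [abs_of_nonneg]; ring
    have h2 : |(x i - x j) - (y i - y j)| ≤ |x i - y i| + |x j - y j| := by
      have : (x i - x j) - (y i - y j) = (x i - y i) - (x j - y j) := by ring
      rw [this]
      exact abs_sub _ _
    have h3 : |x i - y i| ≤ dist x y := by
      rw [← Real.dist_eq]; exact dist_le_pi_dist x y i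
    have h4 : |x j - y j| ≤ dist x y := by
      rw [← Real.dist_eq]; exact dist_le_pi_dist x y j
    linarith
  calc (1 / (N:ℝ)) * |∑ j : Fin N, (Real.sin (x i - x j) - Real.sin (y i - y j))|
      ≤ (1 / (N:ℝ)) * ∑ j : Fin N, |Real.sin (x i - x j) - Real.sin (y i - y j)| := by
        gcongr
        exact Finset.abs_sum_le_sum_abs _ _
    _ ≤ (1 / (N:ℝ)) * ∑ _j : Fin N, 2 * dist x y := by
        gcongr with j
        exact hterm j
    _ = (1 / (N:ℝ)) * ((N:ℝ) * (2 * dist x y)) := by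
        rw [Finset.sum_const]; simp [Finset.card_univ]
    _ = 2 * dist x y := by field_simp

/-- A non-stationary Kuramoto solution never reaches an equilibrium. -/
lemma kuramoto_no_equilibrium (N : ℕ) (θ : Fin N → ℝ → ℝ)
    (hode : ∀ i, ∀ t ≥ (0:ℝ),
      HasDerivAt (θ i) (-(1 / (N:ℝ)) * ∑ j : Fin N, Real.sin (θ i t - θ j t)) t)
    (hnonstat : ¬ (∀ t ≥ (0:ℝ), ∀ i, θ i t = θ i 0))
    {t₀ : ℝ} (ht₀ : 0 ≤ t₀) :
    ∃ i, -(1 / (N:ℝ)) * ∑ j : Fin N, Real.sin (θ i t₀ - θ j t₀) ≠ 0 := by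
  by_contra hcon
  push_neg at hcon
  set v : (Fin N → ℝ) → (Fin N → ℝ) :=
    fun x i => -(1 / (N:ℝ)) * ∑ j : Fin N, Real.sin (x i - x j) with hv
  set f : ℝ → (Fin N → ℝ) := fun t i => θ i t with hf
  have hf' : ∀ t ≥ (0:ℝ), HasDerivAt f (v (f t)) t := fun t ht =>
    hasDerivAt_pi.mpr (fun i => hode i t ht)
  have hveq : v (f t₀) = 0 := funext hcon
  set g : ℝ → (Fin N → ℝ) := fun _ => f t₀ with hg
  have hg' : ∀ t : ℝ, HasDerivAt g (v (g t)) t := by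
    intro t
    have h0 : v (g t) = 0 := hveq
    rw [h0]
    exact hasDerivAt_const _ _
  have key : ∀ t ≥ (0:ℝ), f t = f t₀ := by
    intro t ht
    rcases le_total t t₀ with h | h
    · have heq := ODE_solution_unique_of_mem_Icc_left (v := fun _ => v)
        (s := fun _ => Set.univ) (K := 2) (a := 0) (b := t₀) (f := f) (g := g)
        (fun _ _ => (kuramoto_lipschitz N).lipschitzOnWith)
        (continuousOn_of_forall_continuousAt (fun s hs => (hf' s hs.1).continuousAt))
        (fun s hs => (hf' s hs.1.le).hasDerivWithinAt)
        (fun _ _ => trivial)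
        (continuousOn_of_forall_continuousAt (fun _ _ => (hg' _).continuousAt))
        (fun s _ => (hg' s).hasDerivWithinAt)
        (fun _ _ => trivial) rfl
      exact heq ⟨ht, h⟩
    · have heq := ODE_solution_unique (v := fun _ => v) (K := 2)
        (a := t₀) (b := t) (f := f) (g := g)
        (fun _ => kuramoto_lipschitz N)
        (continuousOn_of_forall_continuousAt
          (fun s hs => (hf' s (le_trans ht₀ hs.1)).continuousAt))
        (fun s hs => (hf' s (le_trans ht₀ hs.1)).hasDerivWithinAt)
        (continuousOn_of_forall_continuousAt (fun _ _ => (hg' _).continuousAt))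
        (fun s _ => (hg' s).hasDerivWithinAt) rfl
      exact heq ⟨h, le_refl t⟩
  apply hnonstat
  intro t ht i
  have h1 := congrFun (key t ht) i
  have h2 := congrFun (key 0 le_rfl) i
  simp only [hf] at h1 h2
  rw [h1, ← h2]

theorem kuramoto_R_monotone (N : ℕ) (hN : 0 < N) (θ : Fin N → ℝ → ℝ)
    (hode : ∀ i, ∀ t ≥ (0:ℝ),
      HasDerivAt (θ i) (-(1 / (N:ℝ)) * ∑ j : Fin N, Real.sin (θ i t - θ j t)) t)
    (hnonstat : ¬ (∀ t ≥ (0:ℝ), ∀ i, θ i t = θ i 0))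
    (z : ℝ → ℂ)
    (hz : ∀ t, z t = (1 / (N:ℝ)) * ∑ j : Fin N, Complex.exp (Complex.I * (θ j t : ℂ))) :
    (∀ t > (0:ℝ), z t ≠ 0) ∧
    (∀ t > (0:ℝ), ∃ d > (0:ℝ), HasDerivAt (fun s => ‖z s‖) d t) ∧
    (∃ Rstar ∈ Set.Ioc (0:ℝ) 1,
      Tendsto (fun t => ‖z t‖) atTop (nhds Rstar)) := by
  have hN' : (0:ℝ) < N := Nat.cast_pos.mpr hN
  set D : Fin N → ℝ → ℝ :=
    fun i t => -(1 / (N:ℝ)) * ∑ j : Fin N, Real.sin (θ i t - θ j t) with hD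
  have hnoneq : ∀ t ≥ (0:ℝ), ∃ i, D i t ≠ 0 := fun t ht =>
    kuramoto_no_equilibrium N θ hode hnonstat ht
  set A : ℝ → ℝ := fun t => (1 / (N:ℝ)) * ∑ j : Fin N, Real.cos (θ j t) with hA
  set B : ℝ → ℝ := fun t => (1 / (N:ℝ)) * ∑ j : Fin N, Real.sin (θ j t) with hB
  set S : ℝ → ℝ := fun t => A t ^ 2 + B t ^ 2 with hS
  set Q : ℝ → ℝ := fun t => (1 / (N:ℝ)) * ∑ j : Fin N, (D j t) ^ 2 with hQ
  -- real and imaginary parts of z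
  have hcoe : ((1:ℂ) / ((N:ℝ):ℂ)) = (((1/(N:ℝ)):ℝ):ℂ) := by push_cast; ring
  have hzre : ∀ t, (z t).re = A t := by
    intro t
    rw [hz t, hcoe, Complex.re_ofReal_mul, Complex.re_sum]
    simp only [hA, mul_comm Complex.I, Complex.exp_ofReal_mul_I_re]
  have hzim : ∀ t, (z t).im = B t := by
    intro t
    rw [hz t, hcoe, Complex.im_ofReal_mul, Complex.im_sum]
    simp only [hB, mul_comm Complex.I, Complex.exp_ofReal_mul_I_im]
  have habs : ∀ t, ‖z t‖ = Real.sqrt (S t) := by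
    intro t
    rw [Complex.norm_def, Complex.normSq_apply, hzre, hzim, hS]
    ring_nf
  -- the key pointwise identity
  have hkey : ∀ t, ∀ j, Real.cos (θ j t) * B t - Real.sin (θ j t) * A t = D j t := by
    intro t j
    have h1 : D j t = ∑ k : Fin N, (-(1/(N:ℝ))) *
        (Real.sin (θ j t) * Real.cos (θ k t) - Real.cos (θ j t) * Real.sin (θ k t)) := by
      rw [hD]
      simp only
      rw [Finset.mul_sum]
      exact Finset.sum_congr rfl (fun k _ => by rw [Real.sin_sub])
    rw [h1, hA, hB]
    simp only
    rw [Finset.mul_sum, Finset.mul_sum, Finset.mul_sum, Finset.mul_sum,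
      ← Finset.sum_sub_distrib]
    exact Finset.sum_congr rfl (fun k _ => by ring)
  -- derivative of S
  have hS' : ∀ t ≥ (0:ℝ), HasDerivAt S (2 * Q t) t := by
    intro t ht
    have hA' : HasDerivAt A ((1/(N:ℝ)) * ∑ j : Fin N, (-Real.sin (θ j t) * D j t)) t := by
      rw [hA]
      exact HasDerivAt.const_mul _ (HasDerivAt.fun_sum (fun j _ => (hode j t ht).cos))
    have hB' : HasDerivAt B ((1/(N:ℝ)) * ∑ j : Fin N, (Real.cos (θ j t) * D j t)) t := by
      rw [hB]
      exact HasDerivAt.const_mul _ (HasDerivAt.fun_sum (fun j _ => (hode j t ht).sin))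
    have h2 := ((hA'.pow 2).add (hB'.pow 2))
    have h3 : HasDerivAt S ((2:ℕ) * A t ^ (2-1) * ((1/(N:ℝ)) * ∑ j : Fin N, (-Real.sin (θ j t) * D j t))
        + (2:ℕ) * B t ^ (2-1) * ((1/(N:ℝ)) * ∑ j : Fin N, (Real.cos (θ j t) * D j t))) t := h2
    convert h3 using 1
    push_cast
    have e1 : A t * ((1/(N:ℝ)) * ∑ j : Fin N, (-Real.sin (θ j t) * D j t))
        + B t * ((1/(N:ℝ)) * ∑ j : Fin N, (Real.cos (θ j t) * D j t)) = Q t := by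
      have e2 : A t * ((1/(N:ℝ)) * ∑ j : Fin N, (-Real.sin (θ j t) * D j t))
          + B t * ((1/(N:ℝ)) * ∑ j : Fin N, (Real.cos (θ j t) * D j t))
          = ∑ j : Fin N, (1/(N:ℝ)) *
              (D j t * (Real.cos (θ j t) * B t - Real.sin (θ j t) * A t)) := by
        rw [Finset.mul_sum, Finset.mul_sum, Finset.mul_sum, Finset.mul_sum,
          ← Finset.sum_add_distrib]
        exact Finset.sum_congr rfl (fun j _ => by ring)
      rw [e2, hQ]
      simp only
      rw [Finset.mul_sum]
      exact Finset.sum_congr rfl (fun j _ => by rw [hkey t j]; ring)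
    linarith [e1]
  -- positivity of Q
  have hQpos : ∀ t ≥ (0:ℝ), 0 < Q t := by
    intro t ht
    obtain ⟨i, hi⟩ := hnoneq t ht
    have hsum : 0 < ∑ j : Fin N, (D j t) ^ 2 :=
      Finset.sum_pos' (fun j _ => sq_nonneg _)
        ⟨i, Finset.mem_univ i,
          lt_of_le_of_ne (sq_nonneg _) (Ne.symm (pow_ne_zero 2 hi))⟩
    have h14 : (0:ℝ) < 1/(N:ℝ) := by positivity
    have := mul_pos h14 hsum
    rw [hQ]
    exact this
  -- monotonicity of S
  have hScont : ContinuousOn S (Set.Ici 0) :=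
    continuousOn_of_forall_continuousAt (fun t ht => (hS' t ht).continuousAt)
  have hSmono : StrictMonoOn S (Set.Ici 0) := by
    apply strictMonoOn_of_deriv_pos (convex_Ici 0) hScont
    intro t ht
    rw [interior_Ici] at ht
    rw [(hS' t ht.le).deriv]
    linarith [hQpos t ht.le]
  have hS0 : 0 ≤ S 0 := by rw [hS]; positivity
  have hSpos : ∀ t > (0:ℝ), 0 < S t := by
    intro t ht
    have := hSmono Set.self_mem_Ici (Set.mem_Ici.mpr ht.le) ht
    linarith
  -- part 1
  have part1 : ∀ t > (0:ℝ), z t ≠ 0 := by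
    intro t ht h
    have h2 : 0 < ‖z t‖ := by
      rw [habs t]
      exact Real.sqrt_pos.mpr (hSpos t ht)
    rw [h] at h2
    simp at h2
  -- part 2
  have part2 : ∀ t > (0:ℝ), ∃ d > (0:ℝ), HasDerivAt (fun s => ‖z s‖) d t := by
    intro t ht
    refine ⟨Q t / Real.sqrt (S t), div_pos (hQpos t ht.le) (Real.sqrt_pos.mpr (hSpos t ht)), ?_⟩
    have hfun : (fun s => ‖z s‖) = fun s => Real.sqrt (S s) := funext habs
    rw [hfun]
    have hd := (Real.hasDerivAt_sqrt (ne_of_gt (hSpos t ht))).comp t (hS' t ht.le)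
    rw [Function.comp_def] at hd
    refine hd.congr_deriv ?_
    have h0 : Real.sqrt (S t) ≠ 0 := ne_of_gt (Real.sqrt_pos.mpr (hSpos t ht))
    rw [one_div, mul_inv, div_eq_mul_inv]
    ring
  refine ⟨part1, part2, ?_⟩
  -- part 3
  have hRle1 : ∀ t, ‖z t‖ ≤ 1 := by
    intro t
    rw [hz t]
    rw [norm_mul]
    have h1 : ‖((1:ℂ) / ((N:ℝ):ℂ))‖ = 1 / (N:ℝ) := by
      rw [norm_div, norm_one, Complex.norm_real, Real.norm_eq_abs, abs_of_pos hN']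
    rw [h1]
    calc (1 / (N:ℝ)) * ‖(∑ j : Fin N, Complex.exp (Complex.I * (θ j t : ℂ)))‖
        ≤ (1 / (N:ℝ)) * ∑ j : Fin N, ‖(Complex.exp (Complex.I * (θ j t : ℂ)))‖ := by
          gcongr
          exact norm_sum_le _ _
      _ = (1 / (N:ℝ)) * ∑ _j : Fin N, (1:ℝ) := by
          congr 1
          exact Finset.sum_congr rfl (fun j _ => by
            rw [Complex.norm_exp]
            simp)
      _ = 1 := by
          rw [Finset.sum_const]
          simp [Finset.card_univ]
          field_simp
  have hRmono : MonotoneOn (fun t => ‖z t‖) (Set.Ici 0) := by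
    intro s hs t ht hst
    simp only
    rw [habs s, habs t]
    exact Real.sqrt_le_sqrt (hSmono.monotoneOn hs ht hst)
  set g : ℝ → ℝ := fun t => ‖z (max 1 t)‖ with hg
  have hgmono : Monotone g := fun s t h =>
    hRmono (Set.mem_Ici.mpr (le_trans zero_le_one (le_max_left 1 s)))
      (Set.mem_Ici.mpr (le_trans zero_le_one (le_max_left 1 t)))
      (max_le_max le_rfl h)
  have hbdd : BddAbove (Set.range g) := by
    refine ⟨1, ?_⟩
    rintro x ⟨t, rfl⟩
    exact hRle1 _
  have htend : Tendsto g atTop (nhds (⨆ t, g t)) := tendsto_atTop_ciSup hgmono hbdd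
  refine ⟨⨆ t, g t, ⟨?_, ?_⟩, ?_⟩
  · have h1 : g 1 ≤ ⨆ t, g t := le_ciSup hbdd 1
    have h2 : 0 < g 1 := by
      rw [hg]
      simp only [max_self]
      rw [habs 1]
      exact Real.sqrt_pos.mpr (hSpos 1 one_pos)
    linarith
  · exact ciSup_le (fun t => hRle1 _)
  · apply htend.congr'
    filter_upwards [eventually_ge_atTop (1:ℝ)] with t ht
    rw [hg]
    simp only
    rw [max_eq_right ht]
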